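/- arXiv:2512.07766 — 9 statements merged into one kernel-verified Lean document; each statement's English description precedes it below -/
import Mathlib

section
/- Let W be the weight matrix and θ the threshold vector of a Hopfield network on n neurons, let s be a state, and let u be a neuron whose asynchronous update changes its activation. Then the energy difference satisfies E(Up(s,u)) − E(s) = (s u − Up(s,u) u) · (net_u(s) − θ u), where net_u(s) = ∑_{v ≠ u} W u v · s v. -/
open Finset

noncomputable section

/-- The net input to neuron `u` in state `s`: `∑_{v ≠ u} W u v * s v`. -/
def netInput {n : ℕ} (W : Matrix (Fin n) (Fin n) ℝ) (s : Fin n → ℝ) (u : Fin n) : ℝ :=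
  ∑ v ∈ univ.filter (fun v => v ≠ u), W u v * s v

/-- Asynchronous update of the state `s` at neuron `u`. -/
def Up {n : ℕ} (W : Matrix (Fin n) (Fin n) ℝ) (θ : Fin n → ℝ) (s : Fin n → ℝ)
    (u : Fin n) : Fin n → ℝ :=
  Function.update s u (if θ u ≤ netInput W s u then 1 else -1)

/-- The energy of a state of a Hopfield network. -/
def energy {n : ℕ} (W : Matrix (Fin n) (Fin n) ℝ) (θ : Fin n → ℝ) (s : Fin n → ℝ) : ℝ :=
  -(1 / 2) * (∑ u, ∑ v ∈ univ.filter (fun v => v ≠ u), W u v * s u * s v)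
    + ∑ u, θ u * s u

lemma decomp {n : ℕ} (W : Matrix (Fin n) (Fin n) ℝ) (hsymm : W.IsSymm)
    (x : Fin n → ℝ) (u : Fin n) :
    (∑ w, ∑ v ∈ univ.filter (fun v => v ≠ w), W w v * x w * x v)
      = 2 * x u * (∑ v ∈ univ.filter (fun v => v ≠ u), W u v * x v)
        + ∑ w ∈ univ.erase u,
            ∑ v ∈ (univ.filter (fun v => v ≠ w)).erase u, W w v * x w * x v := by
  rw [← Finset.sum_erase_add _ _ (mem_univ u)]
  have hinner : ∀ w ∈ univ.erase u,
      (∑ v ∈ univ.filter (fun v => v ≠ w), W w v * x w * x v)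
        = W w u * x w * x u + ∑ v ∈ (univ.filter (fun v => v ≠ w)).erase u,
            W w v * x w * x v := by
    intro w hw
    rw [← Finset.add_sum_erase _ _ (Finset.mem_filter.mpr
      ⟨mem_univ u, (Finset.ne_of_mem_erase hw).symm⟩)]
  rw [Finset.sum_congr rfl hinner, Finset.sum_add_distrib]
  have h1 : (∑ w ∈ univ.erase u, W w u * x w * x u)
      = x u * ∑ v ∈ univ.filter (fun v => v ≠ u), W u v * x v := by
    rw [Finset.mul_sum, Finset.filter_ne']
    refine Finset.sum_congr rfl fun w hw => ?_
    rw [hsymm.apply u w]; ring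
  have h2 : (∑ v ∈ univ.filter (fun v => v ≠ u), W u v * x u * x v)
      = x u * ∑ v ∈ univ.filter (fun v => v ≠ u), W u v * x v := by
    rw [Finset.mul_sum]; exact Finset.sum_congr rfl fun v _ => by ring
  rw [h1, h2]; ring

/-- Energy difference under an asynchronous update that changes the activation of `u`. -/
theorem energy_diff_of_update {n : ℕ} (hn : 2 ≤ n)
    (W : Matrix (Fin n) (Fin n) ℝ) (hsymm : W.IsSymm) (hdiag : ∀ u, W u u = 0)
    (θ : Fin n → ℝ) (s : Fin n → ℝ) (hs : ∀ u, s u = -1 ∨ s u = 1) (u : Fin n)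
    (hchange : Up W θ s u u ≠ s u) :
    energy W θ (Up W θ s u) - energy W θ s
      = (s u - Up W θ s u u) * (netInput W s u - θ u) := by
  set t := Up W θ s u with ht
  have htv : ∀ v, v ≠ u → t v = s v := fun v hv => Function.update_of_ne hv _ _
  have hFs := decomp W hsymm s u
  have hFt := decomp W hsymm t u
  have hnet : (∑ v ∈ univ.filter (fun v => v ≠ u), W u v * t v)
      = ∑ v ∈ univ.filter (fun v => v ≠ u), W u v * s v := by
    refine Finset.sum_congr rfl fun v hv => ?_
    rw [htv v (Finset.mem_filter.mp hv).2]
  have hG : (∑ w ∈ univ.erase u,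
        ∑ v ∈ (univ.filter (fun v => v ≠ w)).erase u, W w v * t w * t v)
      = ∑ w ∈ univ.erase u,
        ∑ v ∈ (univ.filter (fun v => v ≠ w)).erase u, W w v * s w * s v := by
    refine Finset.sum_congr rfl fun w hw => Finset.sum_congr rfl fun v hv => ?_
    rw [htv w (Finset.ne_of_mem_erase hw), htv v (Finset.ne_of_mem_erase hv)]
  have hθ : (∑ v, θ v * t v) = θ u * t u - θ u * s u + ∑ v, θ v * s v := by
    rw [← Finset.add_sum_erase _ (fun v => θ v * t v) (mem_univ u),
        ← Finset.add_sum_erase _ (fun v => θ v * s v) (mem_univ u)]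
    have : (∑ v ∈ univ.erase u, θ v * t v) = ∑ v ∈ univ.erase u, θ v * s v :=
      Finset.sum_congr rfl fun v hv => by rw [htv v (Finset.ne_of_mem_erase hv)]
    rw [this]; ring
  unfold energy netInput
  rw [hFs, hFt, hnet, hG, hθ]
  ring
end
end

section
/- Let W be the weight matrix and θ the threshold vector of a Hopfield network on n neurons. For every state s and every neuron u, the asynchronous update cannot increase the energy: E(Up(s,u)) ≤ E(s). -/
open Finset

noncomputable section

-- filtered sum = full sum when diag zero
lemma filter_eq_full {n : ℕ} (u : Fin n) (f : Fin n → ℝ) (h : f u = 0) :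
    ∑ v ∈ univ.filter (fun v => v ≠ u), f v = ∑ v, f v := by
  rw [Finset.filter_ne', Finset.sum_erase _ h]

lemma netInput_eq {n : ℕ} (W : Matrix (Fin n) (Fin n) ℝ) (hdiag : ∀ u, W u u = 0)
    (s : Fin n → ℝ) (u : Fin n) : netInput W s u = ∑ v, W u v * s v := by
  unfold netInput
  exact filter_eq_full u _ (by simp [hdiag])

lemma energy_eq {n : ℕ} (W : Matrix (Fin n) (Fin n) ℝ) (hdiag : ∀ u, W u u = 0)
    (θ : Fin n → ℝ) (s : Fin n → ℝ) :
    energy W θ s = -(1 / 2) * (∑ a, ∑ v, W a v * s a * s v) + ∑ a, θ a * s a := by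
  unfold energy
  congr 2
  refine Finset.sum_congr rfl fun a _ => ?_
  exact filter_eq_full a _ (by simp [hdiag])

/-- An asynchronous update cannot increase the energy of a Hopfield network state. -/
theorem energy_update_le {n : ℕ} (hn : 2 ≤ n)
    (W : Matrix (Fin n) (Fin n) ℝ) (hsymm : W.IsSymm) (hdiag : ∀ u, W u u = 0)
    (θ : Fin n → ℝ) (s : Fin n → ℝ) (hs : ∀ u, s u = -1 ∨ s u = 1) (u : Fin n) :
    energy W θ (Up W θ s u) ≤ energy W θ s := by
  set c : ℝ := if θ u ≤ netInput W s u then 1 else -1 with hc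
  set d : ℝ := c - s u with hd
  set N : ℝ := ∑ v, W u v * s v with hN
  have hNet : netInput W s u = N := netInput_eq W hdiag s u
  have ht : Up W θ s u = fun a => s a + d * (if a = u then 1 else 0) := by
    funext a
    by_cases h : a = u
    · subst h; simp [Up, hd, hc]
    · simp [Up, Function.update_of_ne h, h]
  have hsum2 : ∑ a, ∑ v, W a v * (Up W θ s u a) * (Up W θ s u v)
      = (∑ a, ∑ v, W a v * s a * s v) + 2 * d * N := by
    rw [ht]
    have expand : ∀ a v : Fin n,
        W a v * (s a + d * (if a = u then 1 else 0)) * (s v + d * (if v = u then 1 else 0))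
        = W a v * s a * s v
          + (if a = u then d * (W a v * s v) else 0)
          + (if v = u then d * (W a v * s a) else 0)
          + (if a = u then (if v = u then d * d * W a v else 0) else 0) := by
      intro a v
      by_cases h1 : a = u <;> by_cases h2 : v = u <;> simp [h1, h2] <;> ring
    have hWsymm : ∀ a, W a u = W u a := fun a => by
      have h := Matrix.IsSymm.apply hsymm u a
      simpa [Matrix.transpose_apply] using h
    simp only [expand, Finset.sum_add_distrib, Finset.sum_ite_eq', Finset.mem_univ, if_true]
    have h2 : ∑ x : Fin n, ∑ y : Fin n, (if x = u then d * (W x y * s y) else 0) = d * N := by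
      rw [Finset.sum_comm]
      simp [Finset.sum_ite_eq', hN, Finset.mul_sum]
    have h3 : ∑ x : Fin n, ∑ y : Fin n, (if x = u then (if y = u then d * d * W x y else 0) else 0) = 0 := by
      simp [Finset.sum_ite_eq', hdiag]
    have h4 : ∑ a, d * (W a u * s a) = d * N := by
      rw [hN, Finset.mul_sum]
      refine Finset.sum_congr rfl fun a _ => ?_
      rw [hWsymm a]
    rw [h2, h3, h4]
    ring
  have hθsum : ∑ a, θ a * (Up W θ s u a) = (∑ a, θ a * s a) + θ u * d := by
    rw [ht]
    have : ∀ a, θ a * (s a + d * (if a = u then 1 else 0))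
        = θ a * s a + (if a = u then θ a * d else 0) := by
      intro a; by_cases h : a = u <;> simp [h] <;> ring
    simp only [this, Finset.sum_add_distrib, Finset.sum_ite_eq', Finset.mem_univ, if_true]
  have hE : energy W θ (Up W θ s u) = energy W θ s + d * (θ u - N) := by
    rw [energy_eq W hdiag, energy_eq W hdiag, hsum2, hθsum]
    ring
  rw [hE]
  have hle : d * (θ u - N) ≤ 0 := by
    by_cases h : θ u ≤ netInput W s u
    · have hc1 : c = 1 := by rw [hc, if_pos h]
      have hd0 : 0 ≤ d := by
        rcases hs u with h' | h' <;> rw [hd, hc1, h'] <;> norm_num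
      have : θ u - N ≤ 0 := by rw [← hNet]; linarith
      exact mul_nonpos_of_nonneg_of_nonpos hd0 this
    · have hc1 : c = -1 := by rw [hc, if_neg h]
      have hd0 : d ≤ 0 := by
        rcases hs u with h' | h' <;> rw [hd, hc1, h'] <;> norm_num
      have : 0 ≤ θ u - N := by rw [← hNet]; push_neg at h; linarith
      exact mul_nonpos_of_nonpos_of_nonneg hd0 this
  linarith
end
end

section
/- Let W be the weight matrix and θ the threshold vector of a Hopfield network on n neurons, let s be a state, and let u be a neuron such that Up(s,u) u ≠ s u. Then either E(Up(s,u)) < E(s), or E(Up(s,u)) = E(s) and the number of neurons with activation +1 in Up(s,u) is strictly greater than in s. -/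
open Finset

noncomputable section

/-- The number of neurons with activation `+1` in state `s`. -/
def pluses {n : ℕ} (s : Fin n → ℝ) : ℕ :=
  (univ.filter (fun u => s u = 1)).card

lemma energy_update {n : ℕ} (W : Matrix (Fin n) (Fin n) ℝ) (hsymm : W.IsSymm)
    (θ : Fin n → ℝ) (s : Fin n → ℝ) (u : Fin n) (a : ℝ) :
    energy W θ (Function.update s u a) - energy W θ s
      = (a - s u) * (θ u - netInput W s u) := by
  set s' := Function.update s u a with hs'
  have hsu : s' u = a := Function.update_self u a s
  have hne : ∀ v, v ≠ u → s' v = s v := fun v hv => Function.update_of_ne hv a s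
  have hL : (∑ v, θ v * s' v) - (∑ v, θ v * s v) = θ u * (a - s u) := by
    rw [← Finset.sum_sub_distrib, Finset.sum_eq_single u]
    · rw [hsu]; ring
    · intro b _ hb; rw [hne b hb]; ring
    · intro h; exact absurd (Finset.mem_univ u) h
  have hQ : (∑ x, ∑ v ∈ univ.filter (fun v => v ≠ x), W x v * s' x * s' v)
      - (∑ x, ∑ v ∈ univ.filter (fun v => v ≠ x), W x v * s x * s v)
      = 2 * ((a - s u) * netInput W s u) := by
    rw [← Finset.sum_sub_distrib]
    have hterm : ∀ x : Fin n,
        (∑ v ∈ univ.filter (fun v => v ≠ x), W x v * s' x * s' v)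
          - (∑ v ∈ univ.filter (fun v => v ≠ x), W x v * s x * s v)
        = if x = u then (a - s u) * netInput W s u
          else W x u * s x * (a - s u) := by
      intro x
      rw [← Finset.sum_sub_distrib]
      by_cases hx : x = u
      · subst hx
        rw [if_pos rfl, netInput, Finset.mul_sum]
        apply Finset.sum_congr rfl
        intro v hv
        rw [Finset.mem_filter] at hv
        rw [hne v hv.2, hsu]; ring
      · simp only [if_neg hx]
        rw [Finset.sum_eq_single u]
        · rw [hsu, hne x hx]; ring
        · intro b hb hbu
          rw [hne b hbu, hne x hx]; ring
        · intro h
          exact absurd (Finset.mem_filter.mpr ⟨Finset.mem_univ u, fun h => hx h.symm⟩) h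
    rw [Finset.sum_congr rfl (fun x _ => hterm x)]
    rw [← Finset.add_sum_erase _ _ (Finset.mem_univ u)]
    rw [if_pos rfl]
    have herase : ∑ x ∈ univ.erase u,
        (if x = u then (a - s u) * netInput W s u else W x u * s x * (a - s u))
        = (a - s u) * netInput W s u := by
      rw [← Finset.filter_ne' univ u]
      rw [netInput, Finset.mul_sum]
      apply Finset.sum_congr rfl
      intro v hv
      rw [Finset.mem_filter] at hv
      rw [if_neg hv.2]
      have hw : W v u = W u v := by
        have := hsymm
        rw [Matrix.IsSymm] at this
        calc W v u = W.transpose u v := rfl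
        _ = W u v := by rw [this]
      rw [hw]; ring
    rw [herase]; ring
  have expand : ∀ t : Fin n → ℝ, energy W θ t
      = -(1/2) * (∑ x, ∑ v ∈ univ.filter (fun v => v ≠ x), W x v * t x * t v)
        + ∑ v, θ v * t v := fun t => rfl
  rw [expand s', expand s]
  set Q' := ∑ x, ∑ v ∈ univ.filter (fun v => v ≠ x), W x v * s' x * s' v
  set Q := ∑ x, ∑ v ∈ univ.filter (fun v => v ≠ x), W x v * s x * s v
  set L' := ∑ v, θ v * s' v
  set L := ∑ v, θ v * s v
  have hQ2 : Q' = Q + 2 * ((a - s u) * netInput W s u) := by linarith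
  have hL2 : L' = L + θ u * (a - s u) := by linarith
  rw [hQ2, hL2]; ring

/-- If an asynchronous update changes the activation of `u`, then either the energy strictly
decreases, or the energy is unchanged and the number of `+1` activations strictly increases. -/
theorem energy_lt_or_pluses_incr {n : ℕ} (hn : 2 ≤ n)
    (W : Matrix (Fin n) (Fin n) ℝ) (hsymm : W.IsSymm) (hdiag : ∀ u, W u u = 0)
    (θ : Fin n → ℝ) (s : Fin n → ℝ) (hs : ∀ u, s u = -1 ∨ s u = 1) (u : Fin n)
    (hchange : Up W θ s u u ≠ s u) :
    energy W θ (Up W θ s u) < energy W θ s ∨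
    (energy W θ (Up W θ s u) = energy W θ s ∧ pluses s < pluses (Up W θ s u)) := by
  set a : ℝ := if θ u ≤ netInput W s u then 1 else -1 with ha
  have hup : Up W θ s u = Function.update s u a := rfl
  have huu : Up W θ s u u = a := by rw [hup]; exact Function.update_self u a s
  have hkey := energy_update W hsymm θ s u a
  rw [← hup] at hkey
  rw [huu] at hchange
  by_cases hθ : θ u ≤ netInput W s u
  · have ha1 : a = 1 := by rw [ha, if_pos hθ]
    have hsu : s u = -1 := by
      rcases hs u with h | h
      · exact h
      · exact absurd (ha1.trans h.symm) hchange
    rcases lt_or_eq_of_le hθ with hlt | heq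
    · left
      have : energy W θ (Up W θ s u) - energy W θ s < 0 := by
        rw [hkey, ha1, hsu]; nlinarith
      linarith
    · right
      constructor
      · have : energy W θ (Up W θ s u) - energy W θ s = 0 := by
          rw [hkey, heq]; ring
        linarith
      · have hset : univ.filter (fun v => Up W θ s u v = 1)
            = insert u (univ.filter (fun v => s v = 1)) := by
          ext v
          simp only [Finset.mem_filter, Finset.mem_insert, Finset.mem_univ, true_and]
          by_cases hv : v = u
          · subst hv
            simp [huu, ha1]
          · rw [hup, Function.update_of_ne hv]
            constructor
            · intro h; exact Or.inr h
            · rintro (h | h)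
              · exact absurd h hv
              · exact h
        have hnotmem : u ∉ univ.filter (fun v => s v = 1) := by
          simp only [Finset.mem_filter, hsu]
          norm_num
        rw [pluses, pluses, hset, Finset.card_insert_of_notMem hnotmem]
        omega
  · left
    have ha1 : a = -1 := by rw [ha, if_neg hθ]
    have hsu : s u = 1 := by
      rcases hs u with h | h
      · exact absurd (ha1.trans h.symm) hchange
      · exact h
    push_neg at hθ
    have : energy W θ (Up W θ s u) - energy W θ s < 0 := by
      rw [hkey, ha1, hsu]; nlinarith
    linarith
end
end

section
/- Let n ≥ 2, let m < n, and let p₁, …, p_m : Fin n → ℝ be patterns that are pairwise orthogonal (dotProduct (p i) (p j) = 0 for i ≠ j). Then each p j is a stable state of the Hopfield network with the Hebbian weight matrix W = ∑_{i=1}^{m} p_i p_iᵀ − m • I and zero thresholds. -/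
open Finset

noncomputable section

/-- The trajectory of states obtained by asynchronously updating along the sequence `useq`. -/
def seqStates {n : ℕ} (W : Matrix (Fin n) (Fin n) ℝ) (θ : Fin n → ℝ)
    (s : Fin n → ℝ) (useq : ℕ → Fin n) : ℕ → (Fin n → ℝ)
  | 0 => s
  | k + 1 => Up W θ (seqStates W θ s useq k) (useq k)

/-- A state is stable if updating any neuron leaves the state unchanged. -/
def isStable {n : ℕ} (W : Matrix (Fin n) (Fin n) ℝ) (θ : Fin n → ℝ)
    (s : Fin n → ℝ) : Prop :=
  ∀ u, Up W θ s u = s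

open Matrix

/-- Pairwise orthogonal patterns stored by the Hebbian rule are stable states of the
Hopfield network with weight matrix `W = ∑ i, pᵢ pᵢᵀ - m • I` and zero thresholds. -/
theorem hebbian_patterns_stable {n m : ℕ} (hn : 2 ≤ n) (hm : m < n)
    (p : Fin m → Fin n → ℝ) (hp : ∀ i u, p i u = -1 ∨ p i u = 1)
    (horth : ∀ i j, i ≠ j → p i ⬝ᵥ p j = 0) :
    ∀ j, isStable ((∑ i, Matrix.vecMulVec (p i) (p i)) - (m : ℝ) • 1)
      (fun _ => 0) (p j) := by
  intro j u
  have hsq : ∀ i v, p i v * p i v = 1 := by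
    intro i v; rcases hp i v with h | h <;> rw [h] <;> ring
  have hself : ∀ i : Fin m, p i ⬝ᵥ p i = n := by
    intro i
    simp only [dotProduct, hsq]
    simp
  have hnet : netInput ((∑ i, Matrix.vecMulVec (p i) (p i)) - (m : ℝ) • 1) (p j) u
      = ((n : ℝ) - m) * p j u := by
    unfold netInput
    have step : ∀ v ∈ univ.filter (fun v => v ≠ u),
        ((∑ i, Matrix.vecMulVec (p i) (p i)) - (m : ℝ) • 1) u v * p j v
        = ∑ i, p i u * p i v * p j v := by
      intro v hv
      simp only [mem_filter, mem_univ, true_and] at hv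
      simp [Matrix.sub_apply, Matrix.sum_apply, Matrix.smul_apply, Matrix.one_apply,
        Matrix.vecMulVec_apply, Ne.symm hv, Finset.sum_mul]
    rw [Finset.sum_congr rfl step, Finset.sum_comm]
    have inner : ∀ i : Fin m, ∑ v ∈ univ.filter (fun v => v ≠ u), p i u * p i v * p j v
        = p i u * (p i ⬝ᵥ p j) - p j u := by
      intro i
      have : ∑ v ∈ univ.filter (fun v => v ≠ u), p i u * p i v * p j v
          = (∑ v, p i u * p i v * p j v) - p i u * p i u * p j u := by
        rw [Finset.filter_ne', Finset.sum_erase_eq_sub (mem_univ u)]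
      rw [this, hsq, one_mul, dotProduct, Finset.mul_sum]
      simp [mul_assoc]
    rw [Finset.sum_congr rfl (fun i _ => inner i), Finset.sum_sub_distrib]
    have : ∑ i : Fin m, p i u * (p i ⬝ᵥ p j) = (n : ℝ) * p j u := by
      rw [Finset.sum_eq_single j]
      · rw [hself]; ring
      · intro i _ hij; rw [horth i j hij, mul_zero]
      · simp
    rw [this]
    simp [Finset.sum_const]
    ring
  have hpos : (0 : ℝ) < (n : ℝ) - m := by
    have : (m : ℝ) < n := by exact_mod_cast hm
    linarith
  unfold Up
  rw [hnet]
  rcases hp j u with h | h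
  · rw [h]
    rw [if_neg (show ¬ (0:ℝ) ≤ ((n:ℝ) - m) * (-1) by nlinarith)]
    rw [← h, Function.update_eq_self]
  · rw [h]
    rw [if_pos (show (0:ℝ) ≤ ((n:ℝ) - m) * 1 by nlinarith)]
    rw [← h, Function.update_eq_self]
end
end

section
/- Let A : Matrix (Fin n) (Fin n) ℝ be entrywise nonnegative and irreducible, and let v : Fin n → ℝ be an entrywise nonnegative, nonzero vector with A.mulVec v = r • v for some real r. Then v is entrywise strictly positive. -/
/-- A nonnegative eigenvector of a nonnegative irreducible matrix is entrywise strictly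
positive. -/
theorem eigenvector_pos_of_irreducible {n : ℕ} (A : Matrix (Fin n) (Fin n) ℝ)
    (hA : ∀ i j, 0 ≤ A i j) (hirr : ∀ i j, ∃ k : ℕ, 0 < (A ^ k) i j)
    (v : Fin n → ℝ) (hv : ∀ i, 0 ≤ v i) (hv0 : v ≠ 0)
    (r : ℝ) (heig : A.mulVec v = r • v) :
    ∀ i, 0 < v i := by
  -- powers act as eigenvalues r^k
  have hpow : ∀ k : ℕ, (A ^ k).mulVec v = (r ^ k) • v := by
    intro k
    induction k with
    | zero => simp [Matrix.mulVec_one]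
    | succ k ih =>
      rw [pow_succ', ← Matrix.mulVec_mulVec, ih, Matrix.mulVec_smul, heig,
        smul_smul, pow_succ, mul_comm]
  -- entries of powers are nonnegative
  have hApow : ∀ k : ℕ, ∀ i j, 0 ≤ (A ^ k) i j := by
    intro k
    induction k with
    | zero => intro i j; by_cases h : i = j <;> simp [Matrix.one_apply, h]
    | succ k ih =>
      intro i j
      rw [pow_succ, Matrix.mul_apply]
      exact Finset.sum_nonneg fun l _ => mul_nonneg (ih i l) (hA l j)
  obtain ⟨j, hj⟩ : ∃ j, 0 < v j := by
    by_contra h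
    push_neg at h
    exact hv0 (funext fun i => le_antisymm (h i) (hv i))
  intro i
  obtain ⟨k, hk⟩ := hirr i j
  have h1 : 0 < ((A ^ k).mulVec v) i := by
    rw [Matrix.mulVec, dotProduct]
    refine Finset.sum_pos' (fun l _ => mul_nonneg (hApow k i l) (hv l)) ⟨j, Finset.mem_univ j, ?_⟩
    exact mul_pos hk hj
  rw [hpow k] at h1
  simp only [Pi.smul_apply, smul_eq_mul] at h1
  rcases (hv i).lt_or_eq with h | h
  · exact h
  · exfalso; rw [← h, mul_zero] at h1; exact lt_irrefl 0 h1
end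

section
/- Let A : Matrix (Fin n) (Fin n) ℝ be entrywise nonnegative. The Collatz–Wielandt function x ↦ min { (A.mulVec x) i / x i : i with x i > 0 } is upper semicontinuous on the standard simplex { x : Fin n → ℝ : x i ≥ 0 for all i and ∑ i, x i = 1 }. -/
open Finset

noncomputable section

/-- The Collatz–Wielandt function of a matrix `A`: the minimum over indices `i` with
`x i > 0` of `(A.mulVec x) i / x i` (and `0` if there is no such index). -/
def collatzWielandtFn {n : ℕ} (A : Matrix (Fin n) (Fin n) ℝ) (x : Fin n → ℝ) : ℝ :=
  if h : (univ.filter (fun i => 0 < x i)).Nonempty then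
    (univ.filter (fun i => 0 < x i)).inf' h (fun i => A.mulVec x i / x i)
  else 0

/-- The Collatz–Wielandt function of a nonnegative matrix is upper semicontinuous on the
standard simplex. -/
theorem collatzWielandtFn_upperSemicontinuousOn {n : ℕ}
    (A : Matrix (Fin n) (Fin n) ℝ) (hA : ∀ i j, 0 ≤ A i j) :
    UpperSemicontinuousOn (collatzWielandtFn A) (stdSimplex ℝ (Fin n)) := by
  intro x hx c hc
  have hne : (univ.filter (fun i => 0 < x i)).Nonempty := by
    have hsum : ∑ i, x i = 1 := hx.2
    have hex : ∃ i, x i ≠ 0 := by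
      by_contra h
      push_neg at h
      simp [h] at hsum
    obtain ⟨i, hi⟩ := hex
    exact ⟨i, by simp [lt_of_le_of_ne (hx.1 i) (Ne.symm hi)]⟩
  rw [collatzWielandtFn, dif_pos hne, Finset.inf'_lt_iff] at hc
  obtain ⟨i₀, hi₀mem, hi₀⟩ := hc
  have hxi₀ : 0 < x i₀ := (Finset.mem_filter.mp hi₀mem).2
  have h1 : Continuous fun y : Fin n → ℝ => A.mulVec y i₀ := by
    simp only [Matrix.mulVec, dotProduct]
    exact continuous_finset_sum _ fun j _ => continuous_const.mul (continuous_apply j)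
  have hcont : ContinuousAt (fun y : Fin n → ℝ => A.mulVec y i₀ / y i₀) x :=
    h1.continuousAt.div (continuous_apply i₀).continuousAt hxi₀.ne'
  have hev1 : ∀ᶠ y in nhds x, A.mulVec y i₀ / y i₀ < c := hcont (Iio_mem_nhds hi₀)
  have hev2 : ∀ᶠ y in nhds x, 0 < y i₀ := (continuous_apply i₀).continuousAt (Ioi_mem_nhds hxi₀)
  have := (hev1.and hev2).filter_mono (nhdsWithin_le_nhds (s := stdSimplex ℝ (Fin n)))
  filter_upwards [this] with y ⟨hy1, hy2⟩
  have hmem : i₀ ∈ univ.filter (fun i => 0 < y i) := by simp [hy2]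
  have hne' : (univ.filter fun i => 0 < y i).Nonempty := ⟨i₀, hmem⟩
  rw [collatzWielandtFn, dif_pos hne']
  exact lt_of_le_of_lt (Finset.inf'_le _ hmem) hy1
end
end

section
/- Let A : Matrix (Fin n) (Fin n) ℝ be entrywise nonnegative and irreducible, and let r be its Perron root (the supremum of the Collatz–Wielandt function over the standard simplex). Then every complex eigenvalue λ of A satisfies |λ| ≤ r; that is, r equals the spectral radius of A. -/
open Finset

noncomputable section

/-- The Perron root of `A`: the supremum of the Collatz–Wielandt function over the
standard simplex. -/
def perronRoot {n : ℕ} (A : Matrix (Fin n) (Fin n) ℝ) : ℝ :=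
  sSup (collatzWielandtFn A '' stdSimplex ℝ (Fin n))

namespace PFaux

open Matrix Filter Topology

variable {n : ℕ}

lemma exists_pos_of_mem_simplex {x : Fin n → ℝ} (hx : x ∈ stdSimplex ℝ (Fin n)) :
    ∃ i, 0 < x i := by
  by_contra h
  push_neg at h
  have h0 : ∀ i ∈ univ, x i = 0 := fun i _ => le_antisymm (h i) (hx.1 i)
  have := hx.2
  rw [Finset.sum_congr rfl h0] at this
  simp at this

lemma mulVec_nonneg {A : Matrix (Fin n) (Fin n) ℝ} (hA : ∀ i j, 0 ≤ A i j)
    {x : Fin n → ℝ} (hx : ∀ i, 0 ≤ x i) (i : Fin n) : 0 ≤ A.mulVec x i := by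
  rw [Matrix.mulVec, dotProduct]
  exact Finset.sum_nonneg fun j _ => mul_nonneg (hA i j) (hx j)

lemma cw_nonneg {A : Matrix (Fin n) (Fin n) ℝ} (hA : ∀ i j, 0 ≤ A i j)
    {x : Fin n → ℝ} (hx : x ∈ stdSimplex ℝ (Fin n)) : 0 ≤ collatzWielandtFn A x := by
  unfold collatzWielandtFn
  split_ifs with h
  · exact Finset.le_inf' h _ fun i hi => by
      have hxi : 0 < x i := (Finset.mem_filter.mp hi).2
      exact div_nonneg (mulVec_nonneg hA hx.1 i) hxi.le
  · exact le_refl 0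

lemma cw_le_bound {A : Matrix (Fin n) (Fin n) ℝ} (hA : ∀ i j, 0 ≤ A i j)
    {x : Fin n → ℝ} (hx : x ∈ stdSimplex ℝ (Fin n)) :
    collatzWielandtFn A x ≤ ∑ i, ∑ j, A i j := by
  obtain ⟨i1, hi1⟩ := exists_pos_of_mem_simplex hx
  obtain ⟨i0, -, hmax⟩ := Finset.exists_max_image univ x ⟨i1, Finset.mem_univ i1⟩
  have hi0 : 0 < x i0 := lt_of_lt_of_le hi1 (hmax i1 (Finset.mem_univ i1))
  have hne : (univ.filter (fun i => 0 < x i)).Nonempty :=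
    ⟨i0, Finset.mem_filter.mpr ⟨Finset.mem_univ _, hi0⟩⟩
  unfold collatzWielandtFn
  rw [dif_pos hne]
  have h1 : A.mulVec x i0 / x i0 ≤ ∑ j, A i0 j := by
    rw [div_le_iff₀ hi0]
    calc A.mulVec x i0 = ∑ j, A i0 j * x j := by rw [Matrix.mulVec, dotProduct]
    _ ≤ ∑ j, A i0 j * x i0 :=
      Finset.sum_le_sum fun j _ => mul_le_mul_of_nonneg_left (hmax j (Finset.mem_univ j)) (hA i0 j)
    _ = (∑ j, A i0 j) * x i0 := by rw [Finset.sum_mul]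
  refine le_trans (Finset.inf'_le (fun i => A.mulVec x i / x i)
    (Finset.mem_filter.mpr ⟨Finset.mem_univ i0, hi0⟩)) (h1.trans ?_)
  exact Finset.single_le_sum (f := fun i => ∑ j, A i j)
    (fun i _ => Finset.sum_nonneg fun j _ => hA i j) (Finset.mem_univ i0)

lemma bddAbove_cw (A : Matrix (Fin n) (Fin n) ℝ) (hA : ∀ i j, 0 ≤ A i j) :
    BddAbove (collatzWielandtFn A '' stdSimplex ℝ (Fin n)) := by
  refine ⟨∑ i, ∑ j, A i j, ?_⟩
  rintro z ⟨x, hx, rfl⟩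
  exact cw_le_bound hA hx

/-- Part 1: every eigenvalue modulus is at most the Perron root. -/
lemma abs_eigen_le (A : Matrix (Fin n) (Fin n) ℝ) (hA : ∀ i j, 0 ≤ A i j)
    (μ : ℂ) (v : Fin n → ℂ) (hv : v ≠ 0)
    (heig : (A.map (Complex.ofReal)).mulVec v = μ • v) :
    ‖μ‖ ≤ perronRoot A := by
  obtain ⟨i1, hi1⟩ := Function.ne_iff.mp hv
  replace hi1 : v i1 ≠ 0 := by simpa using hi1
  set x : Fin n → ℝ := fun i => ‖v i‖ with hxdef
  have hxnn : ∀ i, 0 ≤ x i := fun i => (norm_nonneg _)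
  have hS : 0 < ∑ i, x i :=
    Finset.sum_pos' (fun i _ => hxnn i)
      ⟨i1, Finset.mem_univ i1, by simpa [hxdef] using (norm_pos_iff.mpr hi1)⟩
  set S := ∑ i, x i
  set y : Fin n → ℝ := fun i => x i / S with hydef
  have hy : y ∈ stdSimplex ℝ (Fin n) := by
    refine ⟨fun i => div_nonneg (hxnn i) hS.le, ?_⟩
    rw [← Finset.sum_div, div_self hS.ne']
  have key : ∀ i, ‖μ‖ * x i ≤ A.mulVec x i := by
    intro i
    have h1 : (A.map (Complex.ofReal)).mulVec v i = μ * v i := by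
      have := congrFun heig i
      simpa using this
    calc ‖μ‖ * x i = ‖μ * v i‖ := by simp [hxdef]
    _ = ‖(A.map (Complex.ofReal)).mulVec v i‖ := by rw [h1]
    _ = ‖∑ j, (A i j : ℂ) * v j‖ := by
        simp [Matrix.mulVec, dotProduct, Matrix.map_apply]
    _ ≤ ∑ j, ‖(A i j : ℂ) * v j‖ := norm_sum_le _ _
    _ = ∑ j, A i j * x j := by
        refine Finset.sum_congr rfl fun j _ => ?_
        rw [norm_mul, Complex.norm_real, Real.norm_eq_abs, abs_of_nonneg (hA i j)]
    _ = A.mulVec x i := by rw [Matrix.mulVec, dotProduct]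
  have hAy : ∀ i, A.mulVec y i = A.mulVec x i / S := by
    intro i
    simp only [Matrix.mulVec, dotProduct, hydef, div_eq_mul_inv, Finset.sum_mul,
      mul_assoc]
  have keyy : ∀ i, ‖μ‖ * y i ≤ A.mulVec y i := by
    intro i
    rw [hAy i, hydef]
    calc ‖μ‖ * (x i / S) = (‖μ‖ * x i) / S := by ring
    _ ≤ A.mulVec x i / S := by gcongr; exact key i
  have hy1 : 0 < y i1 := div_pos (by simpa [hxdef] using norm_pos_iff.mpr hi1) hS
  have hne : (univ.filter (fun i => 0 < y i)).Nonempty :=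
    ⟨i1, Finset.mem_filter.mpr ⟨Finset.mem_univ _, hy1⟩⟩
  have hcw : ‖μ‖ ≤ collatzWielandtFn A y := by
    unfold collatzWielandtFn
    rw [dif_pos hne]
    refine Finset.le_inf' hne _ fun i hi => ?_
    have hyi : 0 < y i := (Finset.mem_filter.mp hi).2
    rw [le_div_iff₀ hyi]
    exact keyy i
  exact hcw.trans (le_csSup (bddAbove_cw A hA) ⟨y, hy, rfl⟩)

lemma pow_nonneg_entry {A : Matrix (Fin n) (Fin n) ℝ} (hA : ∀ i j, 0 ≤ A i j) (k : ℕ) :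
    ∀ i j, 0 ≤ (A ^ k) i j := by
  induction k with
  | zero =>
    intro i j
    rw [pow_zero]
    by_cases h : i = j <;> simp [Matrix.one_apply, h]
  | succ k ih =>
    intro i j
    rw [pow_succ, Matrix.mul_apply]
    exact Finset.sum_nonneg fun l _ => mul_nonneg (ih i l) (hA l j)

/-- Key Gelfand estimate: any Collatz-Wielandt value is at most the spectral radius. -/
lemma cw_le_spectralRadius (A : Matrix (Fin n) (Fin n) ℝ) (hA : ∀ i j, 0 ≤ A i j)
    {x : Fin n → ℝ} (hx : x ∈ stdSimplex ℝ (Fin n)) :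
    ENNReal.ofReal (collatzWielandtFn A x) ≤
      spectralRadius ℂ (A.map (Complex.ofReal)) := by
  letI := Matrix.linftyOpNormedRing (α := ℂ) (n := Fin n)
  letI := Matrix.linftyOpNormedAlgebra (α := ℂ) (n := Fin n) (R := ℂ)
  haveI : CompleteSpace (Matrix (Fin n) (Fin n) ℂ) := FiniteDimensional.complete ℂ _
  set M := A.map (Complex.ofReal) with hMdef
  set c := collatzWielandtFn A x with hcdef
  have hc0 : 0 ≤ c := cw_nonneg hA hx
  -- the basic inequality c • x ≤ A x
  have hcx : ∀ i, c * x i ≤ A.mulVec x i := by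
    intro i
    rcases lt_or_eq_of_le (hx.1 i) with hpos | hzero
    · have hne : (univ.filter (fun j => 0 < x j)).Nonempty :=
        ⟨i, Finset.mem_filter.mpr ⟨Finset.mem_univ _, hpos⟩⟩
      have : c ≤ A.mulVec x i / x i := by
        rw [hcdef]
        unfold collatzWielandtFn
        rw [dif_pos hne]
        exact Finset.inf'_le (fun j => A.mulVec x j / x j)
          (Finset.mem_filter.mpr ⟨Finset.mem_univ i, hpos⟩)
      rwa [le_div_iff₀ hpos] at this
    · rw [← hzero, mul_zero]
      exact mulVec_nonneg hA hx.1 i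
  obtain ⟨i0, hi0⟩ := exists_pos_of_mem_simplex hx
  -- iterate
  have hpow : ∀ k : ℕ, ∀ i, c ^ k * x i ≤ (A ^ k).mulVec x i := by
    intro k
    induction k with
    | zero => intro i; simp [Matrix.one_mulVec]
    | succ k ih =>
      intro i
      have h1 : (A ^ (k + 1)).mulVec x = A.mulVec ((A ^ k).mulVec x) := by
        rw [pow_succ', ← Matrix.mulVec_mulVec]
      rw [h1]
      calc c ^ (k + 1) * x i = c ^ k * (c * x i) := by ring
      _ ≤ c ^ k * A.mulVec x i :=
        mul_le_mul_of_nonneg_left (hcx i) (pow_nonneg hc0 k)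
      _ = ∑ j, A i j * (c ^ k * x j) := by
          simp only [Matrix.mulVec, dotProduct, Finset.mul_sum]
          exact Finset.sum_congr rfl fun j _ => by ring
      _ ≤ ∑ j, A i j * (A ^ k).mulVec x j :=
        Finset.sum_le_sum fun j _ => mul_le_mul_of_nonneg_left (ih j) (hA i j)
      _ = A.mulVec ((A ^ k).mulVec x) i := by rw [Matrix.mulVec, dotProduct]
  -- powers of M
  have hMk : ∀ k : ℕ, M ^ k = (A ^ k).map (Complex.ofReal) := by
    intro k
    have : M = Complex.ofRealHom.mapMatrix A := rfl
    rw [this, ← map_pow]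
    rfl
  set xc : Fin n → ℂ := fun i => (x i : ℂ) with hxcdef
  have hxc_norm : ‖xc‖ ≤ 1 := by
    rw [pi_norm_le_iff_of_nonneg zero_le_one]
    intro i
    rw [hxcdef]
    simp only [Complex.norm_real, Real.norm_eq_abs, abs_of_nonneg (hx.1 i)]
    calc x i ≤ ∑ j, x j := Finset.single_le_sum (fun j _ => hx.1 j) (Finset.mem_univ i)
    _ = 1 := hx.2
  have hMxc : ∀ k : ℕ, (M ^ k).mulVec xc = fun i => (((A ^ k).mulVec x i : ℝ) : ℂ) := by
    intro k
    funext i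
    rw [hMk k]
    simp [Matrix.mulVec, dotProduct, Matrix.map_apply, hxcdef]
  -- norm lower bound
  have hnorm : ∀ k : ℕ, c ^ k * x i0 ≤ ‖M ^ k‖ := by
    intro k
    calc c ^ k * x i0 ≤ (A ^ k).mulVec x i0 := hpow k i0
    _ = ‖((M ^ k).mulVec xc) i0‖ := by
        rw [hMxc k]
        simp only [Complex.norm_real, Real.norm_eq_abs]
        rw [abs_of_nonneg]
        refine mulVec_nonneg (fun i j => ?_) hx.1 i0
        exact pow_nonneg_entry hA k i j
    _ ≤ ‖(M ^ k).mulVec xc‖ := norm_le_pi_norm _ i0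
    _ ≤ ‖M ^ k‖ * ‖xc‖ := Matrix.linfty_opNorm_mulVec _ _
    _ ≤ ‖M ^ k‖ * 1 := mul_le_mul_of_nonneg_left hxc_norm (norm_nonneg _)
    _ = ‖M ^ k‖ := mul_one _
  -- Gelfand's formula
  have hgel := spectrum.pow_norm_pow_one_div_tendsto_nhds_spectralRadius M
  have hg : Tendsto (fun k : ℕ => ENNReal.ofReal (c * x i0 ^ (1 / (k : ℝ)))) atTop
      (𝓝 (ENNReal.ofReal c)) := by
    refine (ENNReal.continuous_ofReal.tendsto c).comp ?_
    have h2 : Tendsto (fun k : ℕ => x i0 ^ (1 / (k : ℝ))) atTop (𝓝 1) := by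
      have hcont := Real.continuousAt_const_rpow (a := x i0) (b := 0) hi0.ne'
      have := hcont.tendsto.comp tendsto_one_div_atTop_nhds_zero_nat
      simpa [Real.rpow_zero, Function.comp_def] using this
    have := tendsto_const_nhds (x := c) (f := atTop (α := ℕ)) |>.mul h2
    simpa using this
  refine le_of_tendsto_of_tendsto hg hgel ?_
  filter_upwards [eventually_ge_atTop 1] with k hk
  have hkR : (0 : ℝ) < (k : ℝ) := by exact_mod_cast hk
  have hbase : c * x i0 ^ (1 / (k : ℝ)) ≤ ‖M ^ k‖ ^ (1 / (k : ℝ)) := by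
    have h1 : (c ^ k * x i0) ^ (1 / (k : ℝ)) ≤ ‖M ^ k‖ ^ (1 / (k : ℝ)) :=
      Real.rpow_le_rpow (mul_nonneg (pow_nonneg hc0 k) (hx.1 i0)) (hnorm k)
        (by positivity)
    calc c * x i0 ^ (1 / (k : ℝ)) = (c ^ k) ^ (1 / (k : ℝ)) * x i0 ^ (1 / (k : ℝ)) := by
          rw [← Real.rpow_natCast c k, ← Real.rpow_mul hc0]
          rw [mul_one_div_cancel hkR.ne', Real.rpow_one]
    _ = (c ^ k * x i0) ^ (1 / (k : ℝ)) := by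
          rw [← Real.mul_rpow (pow_nonneg hc0 k) (hx.1 i0)]
    _ ≤ ‖M ^ k‖ ^ (1 / (k : ℝ)) := h1
  exact ENNReal.ofReal_le_ofReal hbase

end PFaux


/-- For a nonnegative irreducible matrix, every complex eigenvalue has modulus at most the
Perron root; that is, the Perron root equals the spectral radius. -/
theorem eigenvalue_abs_le_perronRoot {n : ℕ} (A : Matrix (Fin n) (Fin n) ℝ)
    (hA : ∀ i j, 0 ≤ A i j) (hirr : ∀ i j, ∃ k : ℕ, 0 < (A ^ k) i j) :
    (∀ (μ : ℂ) (v : Fin n → ℂ), v ≠ 0 →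
        (A.map (Complex.ofReal)).mulVec v = μ • v → ‖μ‖ ≤ perronRoot A) ∧
      sSup ((fun μ : ℂ => ‖μ‖) '' spectrum ℂ (A.map (Complex.ofReal)))
        = perronRoot A := by
  classical
  refine ⟨fun μ v hv heig => PFaux.abs_eigen_le A hA μ v hv heig, ?_⟩
  rcases Nat.eq_zero_or_pos n with hn | hn
  · subst hn
    haveI : Subsingleton (Matrix (Fin 0) (Fin 0) ℂ) := ⟨fun a b => by ext i; exact i.elim0⟩
    have hspec : spectrum ℂ (A.map Complex.ofReal) = ∅ :=
      Set.eq_empty_iff_forall_notMem.mpr fun μ hμ =>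
        (spectrum.mem_iff.mp hμ) (isUnit_of_subsingleton _)
    have hsimp : stdSimplex ℝ (Fin 0) = ∅ :=
      Set.eq_empty_iff_forall_notMem.mpr fun x hx => by
        have := hx.2
        simp at this
    rw [hspec, perronRoot, hsimp]
    simp [Real.sSup_empty]
  · haveI : NeZero n := ⟨hn.ne'⟩
    letI := Matrix.linftyOpNormedRing (α := ℂ) (n := Fin n)
    letI := Matrix.linftyOpNormedAlgebra (α := ℂ) (n := Fin n) (R := ℂ)
    haveI : CompleteSpace (Matrix (Fin n) (Fin n) ℂ) := FiniteDimensional.complete ℂ _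
    set M := A.map (Complex.ofReal) with hMdef
    have specNE : (spectrum ℂ M).Nonempty := spectrum.nonempty M
    have spec_eig : ∀ μ ∈ spectrum ℂ M, ∃ v : Fin n → ℂ, v ≠ 0 ∧ M.mulVec v = μ • v := by
      intro μ hμ
      have h1 : ¬IsUnit (algebraMap ℂ (Matrix (Fin n) (Fin n) ℂ) μ - M) :=
        spectrum.mem_iff.mp hμ
      have hdet : (algebraMap ℂ (Matrix (Fin n) (Fin n) ℂ) μ - M).det = 0 := by
        by_contra h
        exact h1 ((Matrix.isUnit_iff_isUnit_det _).mpr (isUnit_iff_ne_zero.mpr h))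
      obtain ⟨v, hv0, hv⟩ := (Matrix.exists_mulVec_eq_zero_iff).mpr hdet
      refine ⟨v, hv0, ?_⟩
      rw [Matrix.sub_mulVec] at hv
      have h2 : (algebraMap ℂ (Matrix (Fin n) (Fin n) ℂ) μ).mulVec v = μ • v := by
        rw [Algebra.algebraMap_eq_smul_one, Matrix.smul_mulVec, Matrix.one_mulVec]
      rw [h2] at hv
      exact (sub_eq_zero.mp hv).symm
    have habs : ∀ μ ∈ spectrum ℂ M, ‖μ‖ ≤ perronRoot A := fun μ hμ => by
      obtain ⟨v, hv0, hv⟩ := spec_eig μ hμ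
      exact PFaux.abs_eigen_le A hA μ v hv0 hv
    set s := sSup ((fun μ : ℂ => ‖μ‖) '' spectrum ℂ M) with hsdef
    have bddS : BddAbove ((fun μ : ℂ => ‖μ‖) '' spectrum ℂ M) :=
      ⟨perronRoot A, by rintro z ⟨μ, hμ, rfl⟩; exact habs μ hμ⟩
    have sNE : ((fun μ : ℂ => ‖μ‖) '' spectrum ℂ M).Nonempty := specNE.image _
    have hs0 : 0 ≤ s := by
      obtain ⟨μ0, hμ0⟩ := specNE
      exact le_trans (norm_nonneg μ0) (le_csSup bddS ⟨μ0, hμ0, rfl⟩)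
    have hρ_le : spectralRadius ℂ M ≤ ENNReal.ofReal s := by
      rw [spectralRadius]
      refine iSup₂_le fun μ hμ => ?_
      have hnn : (‖μ‖₊ : ENNReal) = ENNReal.ofReal (‖μ‖) := by
        exact (ENNReal.ofReal_eq_coe_nnreal (norm_nonneg μ)).symm
      rw [hnn]
      exact ENNReal.ofReal_le_ofReal (le_csSup bddS ⟨μ, hμ, rfl⟩)
    have hcw_le_s : ∀ x ∈ stdSimplex ℝ (Fin n), collatzWielandtFn A x ≤ s := by
      intro x hx
      have h1 := PFaux.cw_le_spectralRadius A hA hx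
      exact (ENNReal.ofReal_le_ofReal_iff hs0).mp (le_trans h1 hρ_le)
    have simplexNE : (stdSimplex ℝ (Fin n)).Nonempty := by
      refine ⟨fun _ => (n : ℝ)⁻¹, fun i => by positivity, ?_⟩
      have hn' : (n : ℝ) ≠ 0 := Nat.cast_ne_zero.mpr hn.ne'
      simp [Finset.sum_const, Finset.card_univ]
    have hr_le : perronRoot A ≤ s :=
      csSup_le (simplexNE.image _) (by rintro z ⟨x, hx, rfl⟩; exact hcw_le_s x hx)
    have hs_le : s ≤ perronRoot A :=
      csSup_le sNE (by rintro z ⟨μ, hμ, rfl⟩; exact habs μ hμ)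
    exact le_antisymm hs_le hr_le
end
end

section
/- Let A : Matrix (Fin n) (Fin n) ℝ be column-stochastic (entrywise nonnegative with every column summing to 1) and irreducible. Then there exists a unique probability vector v (v i ≥ 0 for all i and ∑ i, v i = 1) such that A.mulVec v = v. -/
/-- Perron–Frobenius theorem for column-stochastic irreducible matrices: there is a unique
probability vector `v` with `A.mulVec v = v`. -/
theorem colStochastic_irreducible_unique_stationary {n : ℕ} (hn : 0 < n)
    (A : Matrix (Fin n) (Fin n) ℝ)
    (hpos : ∀ i j, 0 ≤ A i j) (hcol : ∀ j, ∑ i, A i j = 1)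
    (hirr : ∀ i j, ∃ k : ℕ, 0 < (A ^ k) i j) :
    ∃! v : Fin n → ℝ, (∀ i, 0 ≤ v i) ∧ (∑ i, v i = 1) ∧ A.mulVec v = v := by
  -- sums are preserved by A
  have hsum : ∀ w : Fin n → ℝ, ∑ i, A.mulVec w i = ∑ j, w j := by
    intro w
    simp only [Matrix.mulVec, dotProduct]
    rw [Finset.sum_comm]
    refine Finset.sum_congr rfl fun j _ => ?_
    rw [← Finset.sum_mul, hcol, one_mul]
  -- the absolute value of a fixed vector is fixed
  have habs : ∀ v : Fin n → ℝ, A.mulVec v = v →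
      A.mulVec (fun i => |v i|) = (fun i => |v i|) := by
    intro v hv
    have hle : ∀ i, |v i| ≤ A.mulVec (fun j => |v j|) i := by
      intro i
      calc |v i| = |A.mulVec v i| := by rw [hv]
        _ = |∑ j, A i j * v j| := rfl
        _ ≤ ∑ j, |A i j * v j| := Finset.abs_sum_le_sum_abs _ _
        _ = ∑ j, A i j * |v j| := by
            refine Finset.sum_congr rfl fun j _ => ?_
            rw [abs_mul, abs_of_nonneg (hpos i j)]
        _ = A.mulVec (fun j => |v j|) i := rfl
    have hsum0 : ∑ i, (A.mulVec (fun j => |v j|) i - |v i|) = 0 := by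
      rw [Finset.sum_sub_distrib, hsum]
      ring
    have hz := (Finset.sum_eq_zero_iff_of_nonneg
      (fun i _ => sub_nonneg.2 (hle i))).1 hsum0
    funext i
    have h := hz i (Finset.mem_univ i)
    have : A.mulVec (fun j => |v j|) i - |v i| = 0 := h
    linarith
  -- powers of A have nonnegative entries
  have hApow : ∀ k : ℕ, ∀ i j, 0 ≤ (A ^ k) i j := by
    intro k
    induction k with
    | zero =>
      intro i j
      by_cases h : i = j <;> simp [Matrix.one_apply, h]
    | succ k ih =>
      intro i j
      rw [pow_succ, Matrix.mul_apply]
      exact Finset.sum_nonneg fun l _ => mul_nonneg (ih i l) (hpos l j)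
  -- fixed vectors are fixed by powers
  have hpowfix : ∀ (u : Fin n → ℝ), A.mulVec u = u → ∀ k : ℕ, (A ^ k).mulVec u = u := by
    intro u hu k
    induction k with
    | zero => simp
    | succ k ih =>
      rw [pow_succ, ← Matrix.mulVec_mulVec, hu, ih]
  -- a nonnegative nonzero fixed vector is strictly positive
  have hposfix : ∀ u : Fin n → ℝ, (∀ i, 0 ≤ u i) → A.mulVec u = u →
      (∃ j, 0 < u j) → ∀ i, 0 < u i := by
    rintro u hu hfix ⟨j, hj⟩ i
    obtain ⟨k, hk⟩ := hirr i j
    have h1 : u i = ∑ l, (A ^ k) i l * u l := by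
      conv_lhs => rw [← hpowfix u hfix k]
      simp [Matrix.mulVec, dotProduct]
    have h2 : (A ^ k) i j * u j ≤ ∑ l, (A ^ k) i l * u l :=
      Finset.single_le_sum (f := fun l => (A ^ k) i l * u l)
        (fun l _ => mul_nonneg (hApow k i l) (hu l)) (Finset.mem_univ j)
    nlinarith [mul_pos hk hj]
  -- existence of a nonzero fixed vector
  have hdet : (A - 1).det = 0 := by
    rw [← Matrix.exists_vecMul_eq_zero_iff]
    refine ⟨fun _ => (1 : ℝ), ?_, ?_⟩
    · intro h
      have := congrFun h ⟨0, hn⟩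
      simp at this
    · funext j
      simp only [Matrix.vecMul, dotProduct, Matrix.sub_apply, Matrix.one_apply, one_mul]
      rw [Finset.sum_sub_distrib, hcol]
      simp
  obtain ⟨v, hv0, hvfix⟩ := Matrix.exists_mulVec_eq_zero_iff.2 hdet
  have hvfix' : A.mulVec v = v := by
    have := hvfix
    rw [Matrix.sub_mulVec, Matrix.one_mulVec, sub_eq_zero] at this
    exact this
  -- normalize |v|
  obtain ⟨i0, hi0⟩ : ∃ i, v i ≠ 0 := by
    by_contra h
    push_neg at h
    exact hv0 (funext h)
  set s : ℝ := ∑ i, |v i| with hs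
  have hspos : 0 < s :=
    Finset.sum_pos' (fun i _ => abs_nonneg _) ⟨i0, Finset.mem_univ i0, abs_pos.2 hi0⟩
  set w : Fin n → ℝ := fun i => |v i| / s with hw
  have hwfix : A.mulVec w = w := by
    have h1 : w = s⁻¹ • (fun i => |v i|) := by
      funext i; simp [hw, div_eq_inv_mul]
    rw [h1, Matrix.mulVec_smul, habs v hvfix']
  have hwnn : ∀ i, 0 ≤ w i := fun i => div_nonneg (abs_nonneg _) hspos.le
  have hwsum : ∑ i, w i = 1 := by
    simp only [hw, div_eq_inv_mul, ← Finset.mul_sum, ← hs]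
    field_simp
  refine ⟨w, ⟨hwnn, hwsum, hwfix⟩, ?_⟩
  -- uniqueness
  rintro v' ⟨hv'nn, hv'sum, hv'fix⟩
  by_contra hne
  set u : Fin n → ℝ := v' - w with hu
  have hune : ∃ i, u i ≠ 0 := by
    by_contra h
    push_neg at h
    apply hne
    funext i
    have := h i
    simp [hu] at this
    linarith [this]
  have hufix : A.mulVec u = u := by
    rw [hu, Matrix.mulVec_sub, hv'fix, hwfix]
  have husum : ∑ i, u i = 0 := by
    simp [hu, Finset.sum_sub_distrib, hv'sum, hwsum]
  have habsu : A.mulVec (fun i => |u i|) = (fun i => |u i|) := habs u hufix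
  set p : Fin n → ℝ := fun i => (|u i| + u i) / 2 with hp
  set q : Fin n → ℝ := fun i => (|u i| - u i) / 2 with hq
  have hpfix : A.mulVec p = p := by
    have h1 : p = (2:ℝ)⁻¹ • ((fun i => |u i|) + u) := by
      funext i; simp [hp]; ring
    rw [h1, Matrix.mulVec_smul, Matrix.mulVec_add, habsu, hufix]
  have hqfix : A.mulVec q = q := by
    have h1 : q = (2:ℝ)⁻¹ • ((fun i => |u i|) - u) := by
      funext i; simp [hq]; ring
    rw [h1, Matrix.mulVec_smul, Matrix.mulVec_sub, habsu, hufix]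
  have hpnn : ∀ i, 0 ≤ p i := fun i => by
    have := neg_abs_le (u i); have := le_abs_self (u i); simp [hp]; linarith
  have hqnn : ∀ i, 0 ≤ q i := fun i => by
    have := le_abs_self (u i); simp [hq]; linarith
  obtain ⟨i1, hi1⟩ := hune
  have habspos : 0 < ∑ i, |u i| :=
    Finset.sum_pos' (fun i _ => abs_nonneg _) ⟨i1, Finset.mem_univ i1, abs_pos.2 hi1⟩
  have hpsum : ∑ i, p i = (∑ i, |u i|) / 2 := by
    simp only [hp]
    rw [← Finset.sum_div, Finset.sum_add_distrib, husum]
    ring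
  have hqsum : ∑ i, q i = (∑ i, |u i|) / 2 := by
    simp only [hq]
    rw [← Finset.sum_div, Finset.sum_sub_distrib, husum]
    ring
  have hppos : ∀ i, 0 < p i := by
    apply hposfix p hpnn hpfix
    by_contra h
    push_neg at h
    have : ∑ i, p i ≤ 0 := Finset.sum_nonpos fun i _ => h i
    rw [hpsum] at this
    linarith
  have hqpos : ∀ i, 0 < q i := by
    apply hposfix q hqnn hqfix
    by_contra h
    push_neg at h
    have : ∑ i, q i ≤ 0 := Finset.sum_nonpos fun i _ => h i
    rw [hqsum] at this
    linarith
  have := mul_pos (hppos i1) (hqpos i1)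
  have hzero : p i1 * q i1 = 0 := by
    simp only [hp, hq]
    rcases abs_cases (u i1) with ⟨h1, _⟩ | ⟨h1, _⟩ <;> rw [h1] <;> ring
  linarith
end

section
/- Let W be the weight matrix and θ the threshold vector of a Boltzmann machine on n neurons with energy E, let T > 0, and let π be the Boltzmann distribution. The random-scan Gibbs transition matrix P(s, s') = (1/n) · ∑_{u} K_u(s, s'), viewed as a column-stochastic matrix on the finite state space {−1,1}^n, is irreducible, has strictly positive diagonal entries, and π is its unique stationary probability vector: P applied to π equals π, and any probability vector fixed by P equals π. -/
open Finset

noncomputable section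

/-- The `{-1, 1}`-valued state corresponding to a Boolean configuration. -/
def toState {n : ℕ} (b : Fin n → Bool) : Fin n → ℝ :=
  fun u => if b u then 1 else -1

/-- The Boltzmann distribution at temperature `T` over the finite state space `{-1,1}^n`. -/
def boltzmann {n : ℕ} (W : Matrix (Fin n) (Fin n) ℝ) (θ : Fin n → ℝ) (T : ℝ)
    (s : Fin n → Bool) : ℝ :=
  Real.exp (-energy W θ (toState s) / T) /
    ∑ s' : Fin n → Bool, Real.exp (-energy W θ (toState s') / T)

/-- The single-site Gibbs update kernel at neuron `u`: the transition probability from `s`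
to `s'`, which is nonzero only when `s'` agrees with `s` off `u`. -/
def gibbsKernel {n : ℕ} (W : Matrix (Fin n) (Fin n) ℝ) (θ : Fin n → ℝ) (T : ℝ)
    (u : Fin n) (s s' : Fin n → Bool) : ℝ :=
  if ∀ v, v ≠ u → s' v = s v then
    Real.exp (-energy W θ (toState s') / T) /
      (Real.exp (-energy W θ (toState (Function.update s u true)) / T) +
        Real.exp (-energy W θ (toState (Function.update s u false)) / T))
  else 0

/-- The random-scan Gibbs transition matrix, in the column-stochastic convention: the entry
at `(s', s)` is the probability `(1/n) ∑ u, K_u(s, s')` of transitioning from `s` to `s'`. -/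
def randomScan {n : ℕ} (W : Matrix (Fin n) (Fin n) ℝ) (θ : Fin n → ℝ) (T : ℝ) :
    Matrix (Fin n → Bool) (Fin n → Bool) ℝ :=
  fun s' s => (1 / (n : ℝ)) * ∑ u, gibbsKernel W θ T u s s'

section Aux


variable {n : ℕ} (W : Matrix (Fin n) (Fin n) ℝ) (θ : Fin n → ℝ) (T : ℝ)

lemma Zpos : 0 < ∑ s' : Fin n → Bool, Real.exp (-energy W θ (toState s') / T) :=
  Finset.sum_pos (fun _ _ => Real.exp_pos _) ⟨fun _ => true, mem_univ _⟩

lemma boltzmann_pos (s : Fin n → Bool) : 0 < boltzmann W θ T s :=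
  div_pos (Real.exp_pos _) (Zpos W θ T)

lemma boltzmann_sum : ∑ s : Fin n → Bool, boltzmann W θ T s = 1 := by
  unfold boltzmann
  rw [← Finset.sum_div, div_self (Zpos W θ T).ne']

lemma kernel_nonneg (u : Fin n) (s s' : Fin n → Bool) : 0 ≤ gibbsKernel W θ T u s s' := by
  unfold gibbsKernel; split
  · positivity
  · exact le_refl 0

lemma kernel_pos (u : Fin n) (s s' : Fin n → Bool) (h : ∀ v, v ≠ u → s' v = s v) :
    0 < gibbsKernel W θ T u s s' := by
  rw [gibbsKernel, if_pos h]; positivity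

lemma kernel_sum (u : Fin n) (t : Fin n → Bool) :
    ∑ s' : Fin n → Bool, gibbsKernel W θ T u t s' = 1 := by
  classical
  have hfil : (univ.filter fun s' : Fin n → Bool => ∀ v, v ≠ u → s' v = t v)
      = {Function.update t u true, Function.update t u false} := by
    ext s'
    simp only [mem_filter, mem_univ, true_and, mem_insert, mem_singleton]
    constructor
    · intro h
      cases hb : s' u with
      | false =>
        right; funext v
        by_cases hv : v = u
        · subst hv; simp [hb]
        · simp [Function.update_of_ne hv, h v hv]
      | true =>
        left; funext v
        by_cases hv : v = u
        · subst hv; simp [hb]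
        · simp [Function.update_of_ne hv, h v hv]
    · rintro (rfl | rfl) v hv <;> simp [Function.update_of_ne hv]
  have hne : Function.update t u true ≠ Function.update t u false := by
    intro h
    have := congrFun h u
    simp at this
  unfold gibbsKernel
  rw [Finset.sum_ite, Finset.sum_const_zero, add_zero]
  rw [Finset.filter_congr_decidable] at *
  rw [hfil, Finset.sum_pair hne, ← add_div, div_self]
  positivity

lemma detailed_balance (u : Fin n) (s s' : Fin n → Bool) :
    gibbsKernel W θ T u s s' * boltzmann W θ T s
      = gibbsKernel W θ T u s' s * boltzmann W θ T s' := by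
  unfold gibbsKernel
  by_cases h : ∀ v, v ≠ u → s' v = s v
  · have h' : ∀ v, v ≠ u → s v = s' v := fun v hv => (h v hv).symm
    rw [if_pos h, if_pos h']
    have hupd : ∀ b, Function.update s u b = Function.update s' u b := by
      intro b; funext v
      by_cases hv : v = u
      · subst hv; simp
      · simp [Function.update_of_ne hv, h v hv]
    rw [hupd true, hupd false]
    unfold boltzmann
    ring
  · have h' : ¬ ∀ v, v ≠ u → s v = s' v := fun hc => h fun v hv => (hc v hv).symm
    rw [if_neg h, if_neg h']; ring

lemma randomScan_nonneg (s' s : Fin n → Bool) : 0 ≤ randomScan W θ T s' s :=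
  mul_nonneg (by positivity) (Finset.sum_nonneg fun u _ => kernel_nonneg W θ T u s s')

lemma randomScan_pos (hn : 0 < n) (u : Fin n) (s' s : Fin n → Bool)
    (h : ∀ v, v ≠ u → s' v = s v) : 0 < randomScan W θ T s' s := by
  refine mul_pos (by positivity) (Finset.sum_pos' (fun v _ => kernel_nonneg W θ T v s s') ?_)
  exact ⟨u, mem_univ u, kernel_pos W θ T u s s' h⟩

lemma pow_entry_nonneg : ∀ (k : ℕ) (s' s : Fin n → Bool), 0 ≤ ((randomScan W θ T) ^ k) s' s := by
  intro k
  induction k with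
  | zero =>
    intro s' s
    simp only [pow_zero, Matrix.one_apply]
    split <;> norm_num
  | succ k ih =>
    intro s' s
    rw [pow_succ, Matrix.mul_apply]
    exact Finset.sum_nonneg fun t _ => mul_nonneg (ih s' t) (randomScan_nonneg W θ T t s)

lemma reach (hn : 0 < n) : ∀ (k : ℕ) (s s' : Fin n → Bool),
    (univ.filter fun v => s v ≠ s' v).card ≤ k → 0 < ((randomScan W θ T) ^ k) s' s := by
  intro k
  induction k with
  | zero =>
    intro s s' h
    have hss : s = s' := by
      funext v
      by_contra hv
      have : v ∈ univ.filter fun v => s v ≠ s' v := mem_filter.mpr ⟨mem_univ _, hv⟩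
      have := Finset.card_pos.mpr ⟨v, this⟩
      omega
    subst hss
    simp [Matrix.one_apply]
  | succ k ih =>
    intro s s' h
    rw [pow_succ, Matrix.mul_apply]
    by_cases hss : s = s'
    · subst hss
      refine Finset.sum_pos' (fun t _ => mul_nonneg (pow_entry_nonneg W θ T k s t)
        (randomScan_nonneg W θ T t s)) ⟨s, mem_univ s, mul_pos ?_ ?_⟩
      · exact ih s s (by simp)
      · exact randomScan_pos W θ T hn ⟨0, hn⟩ s s (fun _ _ => rfl)
    · obtain ⟨u, hu⟩ : ∃ u, s u ≠ s' u := by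
        by_contra hc
        push_neg at hc
        exact hss (funext hc)
      set t := Function.update s u (s' u) with ht
      have hsub : (univ.filter fun v => t v ≠ s' v)
          ⊆ (univ.filter fun v => s v ≠ s' v).erase u := by
        intro v hv
        rw [mem_filter] at hv
        rcases hv with ⟨-, hv⟩
        have hvu : v ≠ u := by
          intro h'; subst h'; exact hv (by simp [ht])
        refine Finset.mem_erase.mpr ⟨hvu, mem_filter.mpr ⟨mem_univ _, ?_⟩⟩
        rwa [ht, Function.update_of_ne hvu] at hv
      have hule : u ∈ univ.filter fun v => s v ≠ s' v := mem_filter.mpr ⟨mem_univ _, hu⟩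
      have h1 : (univ.filter fun v => t v ≠ s' v).card ≤ k := by
        have := Finset.card_le_card hsub
        have h2 := Finset.card_erase_of_mem hule
        omega
      refine Finset.sum_pos' (fun x _ => mul_nonneg (pow_entry_nonneg W θ T k s' x)
        (randomScan_nonneg W θ T x s)) ⟨t, mem_univ t, mul_pos (ih t s' h1) ?_⟩
      exact randomScan_pos W θ T hn u t s (fun v hv => Function.update_of_ne hv _ _)

lemma stationary (hn : 0 < n) :
    (randomScan W θ T).mulVec (boltzmann W θ T) = boltzmann W θ T := by
  funext s'
  have key : ∀ u, ∑ s : Fin n → Bool, gibbsKernel W θ T u s s' * boltzmann W θ T s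
      = boltzmann W θ T s' := by
    intro u
    calc ∑ s : Fin n → Bool, gibbsKernel W θ T u s s' * boltzmann W θ T s
        = ∑ s : Fin n → Bool, gibbsKernel W θ T u s' s * boltzmann W θ T s' :=
          Finset.sum_congr rfl fun s _ => detailed_balance W θ T u s s'
      _ = (∑ s : Fin n → Bool, gibbsKernel W θ T u s' s) * boltzmann W θ T s' := by
          rw [Finset.sum_mul]
      _ = boltzmann W θ T s' := by rw [kernel_sum W θ T u s', one_mul]
  simp only [Matrix.mulVec, dotProduct, randomScan]
  calc ∑ s : Fin n → Bool, (1 / (n : ℝ) * ∑ u, gibbsKernel W θ T u s s') * boltzmann W θ T s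
      = ∑ s : Fin n → Bool, ∑ u, 1 / (n : ℝ) * (gibbsKernel W θ T u s s' * boltzmann W θ T s) := by
        refine Finset.sum_congr rfl fun s _ => ?_
        rw [Finset.mul_sum, Finset.sum_mul]
        exact Finset.sum_congr rfl fun u _ => by ring
    _ = ∑ u, ∑ s : Fin n → Bool, 1 / (n : ℝ) * (gibbsKernel W θ T u s s' * boltzmann W θ T s) :=
        Finset.sum_comm
    _ = ∑ u : Fin n, 1 / (n : ℝ) * boltzmann W θ T s' := by
        refine Finset.sum_congr rfl fun u _ => ?_
        rw [← Finset.mul_sum, key u]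
    _ = boltzmann W θ T s' := by
        rw [Finset.sum_const, card_univ, Fintype.card_fin, nsmul_eq_mul]
        field_simp

lemma pow_stationary (v : (Fin n → Bool) → ℝ) (hv : (randomScan W θ T).mulVec v = v) :
    ∀ k, ((randomScan W θ T) ^ k).mulVec v = v := by
  intro k
  induction k with
  | zero => simp [Matrix.one_mulVec]
  | succ k ih => rw [pow_succ, ← Matrix.mulVec_mulVec, hv, ih]

end Aux

/-- Ergodicity of the random-scan Gibbs dynamics of a Boltzmann machine: the random-scan
matrix is irreducible, has strictly positive diagonal, and the Boltzmann distribution is its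
unique stationary probability vector. -/

theorem randomScan_ergodic_unique_invariant {n : ℕ} (hn : 2 ≤ n)
    (W : Matrix (Fin n) (Fin n) ℝ) (hsymm : W.IsSymm) (hdiag : ∀ u, W u u = 0)
    (θ : Fin n → ℝ) (T : ℝ) (hT : 0 < T) :
    (∀ s s' : Fin n → Bool, ∃ k : ℕ, 0 < ((randomScan W θ T) ^ k) s s') ∧
      (∀ s : Fin n → Bool, 0 < randomScan W θ T s s) ∧
      (randomScan W θ T).mulVec (boltzmann W θ T) = boltzmann W θ T ∧
      (∀ ρ : (Fin n → Bool) → ℝ, (∀ s, 0 ≤ ρ s) → (∑ s, ρ s = 1) →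
        (randomScan W θ T).mulVec ρ = ρ → ρ = boltzmann W θ T) := by
  have hn0 : 0 < n := by omega
  refine ⟨?_, ?_, stationary W θ T hn0, ?_⟩
  · intro s s'
    exact ⟨n, reach W θ T hn0 n s' s (le_trans (Finset.card_filter_le _ _) (by simp))⟩
  · intro s
    exact randomScan_pos W θ T hn0 ⟨0, hn0⟩ s s (fun _ _ => rfl)
  · intro ρ hρ0 hρ1 hρst
    set π := boltzmann W θ T with hπdef
    have hπpos : ∀ s, 0 < π s := boltzmann_pos W θ T
    set A := (randomScan W θ T) ^ n with hA
    have hApos : ∀ s' s, 0 < A s' s := fun s' s =>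
      reach W θ T hn0 n s s' (le_trans (Finset.card_filter_le _ _) (by simp))
    have hAρ : A.mulVec ρ = ρ := pow_stationary W θ T ρ hρst n
    have hAπ : A.mulVec π = π := pow_stationary W θ T π (stationary W θ T hn0) n
    obtain ⟨s0, -, hs0⟩ := Finset.exists_min_image Finset.univ (fun s => ρ s / π s)
      ⟨fun _ => true, mem_univ _⟩
    set c := ρ s0 / π s0 with hc
    have hδ0 : ∀ s, 0 ≤ ρ s - c * π s := by
      intro s
      have h := hs0 s (mem_univ s)
      rw [le_div_iff₀ (hπpos s)] at h
      linarith
    have hδs0 : ρ s0 - c * π s0 = 0 := by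
      rw [hc, div_mul_cancel₀ _ (hπpos s0).ne']
      ring
    have hAδ : ∑ t, A s0 t * (ρ t - c * π t) = 0 := by
      have h1 := congrFun hAρ s0
      have h2 := congrFun hAπ s0
      simp only [Matrix.mulVec, dotProduct] at h1 h2
      have : ∑ t, A s0 t * (ρ t - c * π t)
          = (∑ t, A s0 t * ρ t) - c * ∑ t, A s0 t * π t := by
        rw [Finset.mul_sum, ← Finset.sum_sub_distrib]
        exact Finset.sum_congr rfl fun t _ => by ring
      rw [this, h1, h2, hδs0]
    have hzero : ∀ t : Fin n → Bool, ρ t - c * π t = 0 := by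
      intro t
      have hterm := (Finset.sum_eq_zero_iff_of_nonneg
        (fun t _ => mul_nonneg (hApos s0 t).le (hδ0 t))).mp hAδ t (mem_univ t)
      rcases mul_eq_zero.mp hterm with h | h
      · exact absurd h (hApos s0 t).ne'
      · exact h
    have hc1 : c = 1 := by
      have : ∑ s, ρ s = c * ∑ s, π s := by
        rw [Finset.mul_sum]
        exact Finset.sum_congr rfl fun s _ => by have := hzero s; linarith
      rw [hρ1, hπdef, boltzmann_sum W θ T, mul_one] at this
      linarith
    funext s
    have := hzero s
    rw [hc1] at this
    linarith
end
end
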